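/- For fixed τ ∈ (0,1/2], the function δ ↦ Δh(τ,δ) = h_b(τ*δ) - h_b(δ) is strictly decreasing in δ on (0,1/2), tending to 0 as δ → 1/2. -/

import Mathlib

noncomputable section

/-- Binary entropy function (in bits), with the convention `log 0 = 0`,
so `hb 0 = hb 1 = 0`. -/
def hb (x : ℝ) : ℝ := -(x * Real.logb 2 x) - (1 - x) * Real.logb 2 (1 - x)

/-- Binary convolution: `a * b = a(1-b) + (1-a)b`. -/
def binConv (a b : ℝ) : ℝ := a * (1 - b) + (1 - a) * b

/-- Capacity of a BSC(δ) with Hamming cost constraint τ: `Δh(τ,δ) = h_b(τ*δ) - h_b(δ)`. -/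
def dh (τ δ : ℝ) : ℝ := hb (binConv τ δ) - hb δ

open Real

lemma hb_eq (x : ℝ) : hb x = Real.binEntropy x / Real.log 2 := by
  simp [hb, binEntropy, logb, log_inv, div_eq_mul_inv]
  ring

lemma hb_continuous : Continuous hb := by
  simp only [funext hb_eq]
  exact binEntropy_continuous.div_const _

theorem dh_strictAnti_tendsto (τ : ℝ) (hτ : τ ∈ Set.Ioc (0:ℝ) (1 / 2)) :
    StrictAntiOn (fun δ => dh τ δ) (Set.Ioo (0:ℝ) (1 / 2)) ∧
      Filter.Tendsto (fun δ => dh τ δ)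
        (nhdsWithin (1 / 2) (Set.Ioo (0:ℝ) (1 / 2))) (nhds 0) := by
  obtain ⟨hτ0, hτ2⟩ := hτ
  have hcont : Continuous (fun δ => dh τ δ) := by
    simp only [dh]
    have : Continuous (binConv τ) := by unfold binConv; fun_prop
    exact (hb_continuous.comp this).sub hb_continuous
  constructor
  · apply strictAntiOn_of_deriv_neg (convex_Ioo _ _) hcont.continuousOn
    intro δ hδ
    rw [interior_Ioo] at hδ
    obtain ⟨hδ0, hδ2⟩ := hδ
    set s := binConv τ δ with hs
    have hsδ : δ < s := by
      have : s - δ = τ * (1 - 2*δ) := by simp [hs, binConv]; ring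
      nlinarith
    have hs2 : s ≤ 1/2 := by
      have : 1 - 2*s = (1 - 2*τ)*(1 - 2*δ) := by simp [hs, binConv]; ring
      nlinarith
    have hs0 : 0 < s := by linarith
    have hs1 : s < 1 := by linarith
    have hδ1 : δ < 1 := by linarith
    -- derivative of dh τ at δ
    have hD : HasDerivAt (fun δ => dh τ δ)
        (((1 - 2*τ) * (log (1 - s) - log s) - (log (1 - δ) - log δ)) / log 2) δ := by
      have h1 : HasDerivAt (fun x : ℝ => binConv τ x) (1 - 2*τ) δ := by
        have base : HasDerivAt (fun x : ℝ => τ + (1 - 2*τ) * x) (1 - 2*τ) δ := by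
          simpa using ((hasDerivAt_id δ).const_mul (1 - 2*τ)).const_add τ
        have : (fun x : ℝ => binConv τ x) = fun x : ℝ => τ + (1 - 2*τ) * x := by
          funext x; simp [binConv]; ring
        rw [this]; exact base
      have h2 : HasDerivAt (fun x : ℝ => binEntropy (binConv τ x))
          ((log (1 - s) - log s) * (1 - 2*τ)) δ := by
        have := (Real.hasDerivAt_binEntropy hs0.ne' hs1.ne).comp δ h1; exact this
      have h3 : HasDerivAt binEntropy (log (1 - δ) - log δ) δ :=
        Real.hasDerivAt_binEntropy hδ0.ne' hδ1.ne
      have h4 : HasDerivAt (fun x => binEntropy (binConv τ x) - binEntropy x)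
          ((log (1 - s) - log s) * (1 - 2*τ) - (log (1 - δ) - log δ)) δ := h2.sub h3
      have h5 := h4.div_const (log 2)
      have : (fun δ => dh τ δ) = fun x => (binEntropy (binConv τ x) - binEntropy x) / log 2 := by
        funext x; simp [dh, hb_eq, sub_div]
      rw [this]
      exact h5.congr_deriv (by ring)
    rw [hD.deriv]
    apply div_neg_of_neg_of_pos _ (log_pos (by norm_num))
    have hgs : 0 ≤ log (1 - s) - log s := by
      have : log s ≤ log (1 - s) := log_le_log hs0 (by linarith)
      linarith
    have hgs' : log (1 - s) - log s < log (1 - δ) - log δ := by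
      have h1 : log (1 - s) ≤ log (1 - δ) := log_le_log (by linarith) (by linarith)
      have h2 : log δ < log s := log_lt_log hδ0 hsδ
      linarith
    nlinarith [log_lt_log hδ0 hsδ]
  · have hbc : binConv τ (1/2) = 1/2 := by rw [binConv]; ring
    have h12 : dh τ (1/2) = 0 := by rw [dh, hbc]; ring
    have ht := hcont.tendsto (1/2 : ℝ)
    rw [h12] at ht
    exact ht.mono_left nhdsWithin_le_nhds
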